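/- Transition matrix for the additive rational Toda system: let z0, a, b, c, α, β, λ ∈ ℂ with z0 ≠ a, z0 ≠ b, z0 ≠ c. Define the 2×2 complex matrix L̃(z1, w, γ, λ) := [[1 + λγ·z1/(w − z1), −λγ·w·z1/(w − z1)], [λγ/(w − z1), 1 − λγ·w/(w − z1)]]. If β/(z0 − c) − α/(z0 − a) = (β − α)/(z0 − b), then L̃(c, z0, β, λ) · L̃(z0, a, α, λ) = I + (λ/(z0 − b)) · [[β·b − α·z0, (α − β)·z0·b], [β − α, α·b − β·z0]], where I is the 2×2 identity matrix; in particular this product depends only on z0, b, α, β, λ. -/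

import Mathlib

open Matrix

/-- Gauge-transformed transition matrix of the cross-ratio system. -/
noncomputable def crLt (z1 w γ lam : ℂ) : Matrix (Fin 2) (Fin 2) ℂ :=
  !![1 + lam * γ * z1 / (w - z1), -(lam * γ * w * z1) / (w - z1);
     lam * γ / (w - z1), 1 - lam * γ * w / (w - z1)]

set_option maxHeartbeats 1600000 in
theorem additive_rational_Toda_transition_matrix
    (z0 a b c α β lam : ℂ)
    (ha : z0 ≠ a) (hb : z0 ≠ b) (hc : z0 ≠ c)
    (h3leg : β / (z0 - c) - α / (z0 - a) = (β - α) / (z0 - b)) :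
    crLt c z0 β lam * crLt z0 a α lam =
      1 + (lam / (z0 - b)) •
        !![β * b - α * z0, (α - β) * z0 * b;
           β - α, α * b - β * z0] := by
  have ha' : z0 - a ≠ 0 := sub_ne_zero.mpr ha
  have ha2 : a - z0 ≠ 0 := sub_ne_zero.mpr (Ne.symm ha)
  have hb' : z0 - b ≠ 0 := sub_ne_zero.mpr hb
  have hc' : z0 - c ≠ 0 := sub_ne_zero.mpr hc
  have key : β * (z0 - a) * (z0 - b) - α * (z0 - c) * (z0 - b)
      = (β - α) * (z0 - c) * (z0 - a) := by
    field_simp at h3leg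
    linear_combination h3leg
  ext i j
  fin_cases i <;> fin_cases j <;>
    · simp [crLt, Matrix.mul_apply, Fin.sum_univ_succ, Matrix.one_apply]
      field_simp
      first
      | linear_combination (lam * z0) * key
      | linear_combination (-(lam * z0)) * key
      | linear_combination lam * key
      | linear_combination (-lam) * key
      | linear_combination (-(lam * z0 ^ 2 * (z0 - a) * (z0 - c))) * key
      | linear_combination (lam * z0 ^ 2 * (z0 - a) * (z0 - c)) * key
      | linear_combination (lam * z0 * (z0 - a) * (z0 - c)) * key
      | linear_combination (-(lam * z0 * (z0 - a) * (z0 - c))) * key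
      | linear_combination (lam * z0 ^ 2) * key
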